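/- Let G act line-transitively on a non-trivial finite regular linear space S which is not a projective plane (so b > v), and let t be a prime dividing both v - 1 and b (a significant prime). If S is a Sylow t-subgroup of a point stabilizer G_α, then S is a Sylow t-subgroup of G and G_α contains the normalizer N_G(S). -/

import Mathlib

open Pointwise

structure LinearSpace (P : Type*) [DecidableEq P] where
  lines : Finset (Finset P)
  exists_unique_line : ∀ a b : P, a ≠ b → ∃! L, L ∈ lines ∧ a ∈ L ∧ b ∈ L

namespace LinearSpace

variable {P : Type*} [DecidableEq P]

/-- Non-trivial: every line has at least 3 points and there are at least two lines. -/
def Nontrivial (S : LinearSpace P) : Prop :=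
  (∀ L ∈ S.lines, 3 ≤ L.card) ∧ 2 ≤ S.lines.card

/-- Regular with line size `k` and `r` lines per point. -/
def Regular [Fintype P] (S : LinearSpace P) (k r : ℕ) : Prop :=
  (∀ L ∈ S.lines, L.card = k) ∧ ∀ a : P, (S.lines.filter fun L => a ∈ L).card = r

/-- `G` acts as automorphisms of `S`, transitively on the set of lines. -/
def LineTrans (G : Type*) [Group G] [MulAction G P] (S : LinearSpace P) : Prop :=
  (∀ (g : G), ∀ L ∈ S.lines, g • L ∈ S.lines) ∧
    ∀ L₁ ∈ S.lines, ∀ L₂ ∈ S.lines, ∃ g : G, g • L₁ = L₂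

section Counting

set_option linter.unusedSectionVars false

/-- Double counting incidences between a point set `O` and the lines. -/
lemma countA [Fintype P] (S : LinearSpace P) (r c : ℕ)
    (hr : ∀ a : P, (S.lines.filter fun L => a ∈ L).card = r)
    (O : Finset P) (hc : ∀ L ∈ S.lines, (L ∩ O).card = c) :
    O.card * r = S.lines.card * c := by
  classical
  have key : ∑ p ∈ O, (S.lines.filter fun L => p ∈ L).card
      = ∑ L ∈ S.lines, (L ∩ O).card := by
    have h1 : ∀ p : P, (S.lines.filter fun L => p ∈ L).card
        = ∑ L ∈ S.lines, if p ∈ L then 1 else 0 := by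
      intro p; rw [Finset.card_filter]
    have h2 : ∀ L : Finset P, (L ∩ O).card = ∑ p ∈ O, if p ∈ L then 1 else 0 := by
      intro L
      rw [← Finset.card_filter]
      congr 1
      rw [Finset.filter_mem_eq_inter, Finset.inter_comm]
    simp only [h1, h2]
    exact Finset.sum_comm
  calc O.card * r = ∑ p ∈ O, r := by rw [Finset.sum_const, smul_eq_mul]
    _ = ∑ p ∈ O, (S.lines.filter fun L => p ∈ L).card := by
        exact Finset.sum_congr rfl fun p _ => (hr p).symm
    _ = ∑ L ∈ S.lines, (L ∩ O).card := key
    _ = ∑ L ∈ S.lines, c := Finset.sum_congr rfl hc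
    _ = S.lines.card * c := by rw [Finset.sum_const, smul_eq_mul]

/-- Counting points of `O` via lines through a fixed point `α ∈ O`. -/
lemma countB [Fintype P] (S : LinearSpace P) (r c : ℕ) (α : P)
    (hr : (S.lines.filter fun L => α ∈ L).card = r)
    (O : Finset P) (hαO : α ∈ O) (hc : ∀ L ∈ S.lines, (L ∩ O).card = c) :
    O.card = r * (c - 1) + 1 := by
  classical
  have hcover : O.erase α
      = (S.lines.filter fun L => α ∈ L).biUnion fun L => (L ∩ O).erase α := by
    apply Finset.ext
    intro p
    simp only [Finset.mem_erase, Finset.mem_biUnion, Finset.mem_filter, Finset.mem_inter]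
    constructor
    · rintro ⟨hpα, hpO⟩
      obtain ⟨L, ⟨hL, hαL, hpL⟩, -⟩ := S.exists_unique_line α p (Ne.symm hpα)
      exact ⟨L, ⟨hL, hαL⟩, hpα, hpL, hpO⟩
    · rintro ⟨L, -, hpα, -, hpO⟩
      exact ⟨hpα, hpO⟩
  have hdisj : ∀ L₁ ∈ S.lines.filter fun L => α ∈ L,
      ∀ L₂ ∈ S.lines.filter fun L => α ∈ L, L₁ ≠ L₂ →
      Disjoint ((L₁ ∩ O).erase α) ((L₂ ∩ O).erase α) := by
    intro L₁ h₁ L₂ h₂ hne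
    rw [Finset.mem_filter] at h₁ h₂
    rw [Finset.disjoint_left]
    intro p hp₁ hp₂
    rw [Finset.mem_erase, Finset.mem_inter] at hp₁ hp₂
    obtain ⟨L, -, huniq⟩ := S.exists_unique_line α p (Ne.symm hp₁.1)
    exact hne ((huniq L₁ ⟨h₁.1, h₁.2, hp₁.2.1⟩).trans (huniq L₂ ⟨h₂.1, h₂.2, hp₂.2.1⟩).symm)
  have hcard : (O.erase α).card = r * (c - 1) := by
    rw [hcover, Finset.card_biUnion hdisj]
    rw [Finset.sum_congr rfl (fun L hL => ?_), Finset.sum_const, smul_eq_mul, hr]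
    rw [Finset.mem_filter] at hL
    rw [Finset.card_erase_of_mem (Finset.mem_inter.mpr ⟨hL.2, hαO⟩), hc L hL.1]
  have := Finset.card_erase_add_one hαO
  omega

end Counting

end LinearSpace

theorem stmt8 {P G : Type*} [Fintype P] [DecidableEq P] [Group G] [MulAction G P]
    [Finite G]
    (S : LinearSpace P) (v b k r : ℕ) (hv : v = Fintype.card P) (hb : b = S.lines.card)
    (hnt : S.Nontrivial) (hreg : S.Regular k r) (hlt : S.LineTrans G)
    (hnpp : b ≠ v)
    (t : ℕ) [Fact t.Prime] (htv : t ∣ v - 1) (htb : t ∣ b)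
    (α : P) (T : Sylow t ↥(MulAction.stabilizer G α)) :
    (∃ U : Sylow t G,
        (U : Subgroup G) = (T : Subgroup ↥(MulAction.stabilizer G α)).map
          (MulAction.stabilizer G α).subtype) ∧
      Subgroup.normalizer (((T : Subgroup ↥(MulAction.stabilizer G α)).map
          (MulAction.stabilizer G α).subtype : Subgroup G) : Set G) ≤ MulAction.stabilizer G α := by
  classical
  obtain ⟨hk3, hb2⟩ := hnt
  obtain ⟨hksize, hrcount⟩ := hreg
  obtain ⟨hstab, htrans⟩ := hlt
  have ht : t.Prime := Fact.out
  -- a line exists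
  obtain ⟨L0, hL0⟩ := Finset.card_pos.mp (lt_of_lt_of_le two_pos hb2)
  have hk3' : 3 ≤ k := (hksize L0 hL0) ▸ hk3 L0 hL0
  have hkv : k ≤ v := by
    rw [hv, ← Finset.card_univ, ← hksize L0 hL0]
    exact Finset.card_le_card (Finset.subset_univ L0)
  -- global counts
  have hcuniv : ∀ L ∈ S.lines, (L ∩ Finset.univ).card = k := by
    intro L hL; rw [Finset.inter_univ]; exact hksize L hL
  have hA : v * r = b * k := by
    rw [hv, ← Finset.card_univ, hb]
    exact LinearSpace.countA S r k hrcount Finset.univ hcuniv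
  have hB : v = r * (k - 1) + 1 := by
    rw [hv, ← Finset.card_univ]
    exact LinearSpace.countB S r k α (hrcount α) Finset.univ (Finset.mem_univ α) hcuniv
  -- r ≥ 2
  have hr2 : 2 ≤ r := by
    rcases Nat.lt_or_ge r 2 with h | h
    · interval_cases r
      · omega
      · -- r = 1 : v = k, then b * k = k so b = 1, contradicting b ≥ 2
        have hbk : b * k = k := by omega
        have : b = 1 := by
          have := Nat.eq_of_mul_eq_mul_right (show 0 < k by omega) (by omega : b * k = 1 * k)
          omega
        omega
    · exact h
  -- the orbit of α as a Finset
  set Ω : Set P := MulAction.orbit G α with hΩ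
  set O : Finset P := Finset.univ.filter (· ∈ Ω) with hO
  have hmemO : ∀ p : P, p ∈ O ↔ p ∈ Ω := by
    intro p; simp [hO]
  have hαO : α ∈ O := (hmemO α).mpr (MulAction.mem_orbit_self α)
  have hsmulΩ : ∀ (g : G) (q : P), q ∈ Ω → g • q ∈ Ω := by
    intro g q hq
    obtain ⟨h, rfl⟩ := MulAction.mem_orbit_iff.mp hq
    exact MulAction.mem_orbit_iff.mpr ⟨g * h, mul_smul g h α⟩
  have hOinv : ∀ g : G, g • O = O := by
    intro g
    apply Finset.ext
    intro p
    rw [Finset.mem_smul_finset]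
    constructor
    · rintro ⟨q, hq, rfl⟩
      exact (hmemO _).mpr (hsmulΩ g q ((hmemO q).mp hq))
    · intro hp
      refine ⟨g⁻¹ • p, (hmemO _).mpr (hsmulΩ g⁻¹ p ((hmemO p).mp hp)), by simp⟩
  -- intersection with lines is constant
  set c : ℕ := (L0 ∩ O).card with hc
  have hcconst : ∀ L ∈ S.lines, (L ∩ O).card = c := by
    intro L hL
    obtain ⟨g, hg⟩ := htrans L0 hL0 L hL
    calc (L ∩ O).card = ((g • L0) ∩ (g • O)).card := by rw [hg, hOinv]
      _ = (g • (L0 ∩ O)).card := by rw [Finset.smul_finset_inter]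
      _ = c := by rw [Finset.card_smul_finset, hc]
  have hAO : O.card * r = b * c := by
    rw [hb]; exact LinearSpace.countA S r c hrcount O hcconst
  have hBO : O.card = r * (c - 1) + 1 :=
    LinearSpace.countB S r c α (hrcount α) O hαO hcconst
  have hck : c ≤ k := by
    rw [hc, ← hksize L0 hL0]
    exact Finset.card_le_card Finset.inter_subset_left
  have hc1 : 1 ≤ c := by
    -- there is a line through α
    have : 0 < (S.lines.filter fun L => α ∈ L).card := by rw [hrcount α]; omega
    obtain ⟨L, hL⟩ := Finset.card_pos.mp this
    rw [Finset.mem_filter] at hL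
    rw [← hcconst L hL.1]
    exact Finset.card_pos.mpr ⟨α, Finset.mem_inter.mpr ⟨hL.2, hαO⟩⟩
  -- arithmetic: c = k
  have e1 : r * r * (k - 1) + r = b * k := by
    have : (r * (k - 1) + 1) * r = b * k := by rw [← hB]; exact hA
    calc r * r * (k - 1) + r = (r * (k - 1) + 1) * r := by ring
      _ = b * k := this
  have e2 : r * r * (c - 1) + r = b * c := by
    have : (r * (c - 1) + 1) * r = b * c := by rw [← hBO]; exact hAO
    calc r * r * (c - 1) + r = (r * (c - 1) + 1) * r := by ring
      _ = b * c := this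
  have hck' : c = k := by
    by_contra hne
    have hlt' : c < k := lt_of_le_of_ne hck hne
    have e1' : r * r * (c - 1) + r * r * (k - c) + r = b * c + b * (k - c) := by
      have hk1 : k - 1 = (c - 1) + (k - c) := by omega
      have hkc : k = c + (k - c) := by omega
      calc r * r * (c - 1) + r * r * (k - c) + r
          = r * r * ((c - 1) + (k - c)) + r := by ring
        _ = r * r * (k - 1) + r := by rw [← hk1]
        _ = b * k := e1
        _ = b * (c + (k - c)) := by rw [← hkc]
        _ = b * c + b * (k - c) := by ring
    have h5 : r * r * (k - c) = b * (k - c) := by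
      have : b * c + r * r * (k - c) = b * c + b * (k - c) := by
        rw [← e2]; linarith [e1']
      exact Nat.add_left_cancel this
    have hbr : r * r = b := Nat.eq_of_mul_eq_mul_right (by omega) h5
    have h6 : r * r * (c - 1) + r = r * r * c := by rw [hbr] at e2 ⊢; exact e2
    have h7 : r * r * c = r * r * (c - 1) + r * r := by
      have hc' : c - 1 + 1 = c := by omega
      calc r * r * c = r * r * ((c - 1) + 1) := by rw [hc']
        _ = r * r * (c - 1) + r * r := by ring
    have h8 : r = r * r := by omega
    have h9 : 2 * r ≤ r * r := Nat.mul_le_mul_right r hr2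
    omega
  -- hence the orbit is everything
  have hOcard : O.card = v := by
    have : O.card * r = v * r := by rw [hAO, hck', ← hA]
    exact Nat.eq_of_mul_eq_mul_right (by omega) this
  have hOuniv : Ω = Set.univ := by
    have : O = Finset.univ := Finset.eq_univ_of_card O (by rw [hOcard, hv])
    apply Set.eq_univ_of_forall
    intro p
    exact (hmemO p).mp (this ▸ Finset.mem_univ p)
  -- ### Part 2: group theory
  have hindex : (MulAction.stabilizer G α).index = v := by
    rw [MulAction.index_stabilizer, ← hΩ, hOuniv, Set.ncard_univ, hv, Nat.card_eq_fintype_card]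
  have hcardG : Nat.card (MulAction.stabilizer G α) * v = Nat.card G := by
    rw [← hindex]; exact Subgroup.card_mul_index _
  have hGne : Nat.card G ≠ 0 := Nat.card_pos.ne'
  have hGαne : Nat.card (MulAction.stabilizer G α) ≠ 0 := Nat.card_pos.ne'
  have htnv : ¬ t ∣ v := by
    intro h
    have h2 : t ∣ v - (v - 1) := Nat.dvd_sub h htv
    have h1 : v - (v - 1) = 1 := by omega
    rw [h1] at h2
    exact ht.one_lt.ne' (Nat.dvd_one.mp h2)
  have hfact : (Nat.card G).factorization t
      = (Nat.card (MulAction.stabilizer G α)).factorization t := by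
    rw [← hcardG, Nat.factorization_mul hGαne (by omega : v ≠ 0)]
    simp [Nat.factorization_eq_zero_of_not_dvd htnv]
  have hScard : Nat.card ((T : Subgroup ↥(MulAction.stabilizer G α)).map
      (MulAction.stabilizer G α).subtype) = t ^ (Nat.card G).factorization t := by
    rw [hfact, ← T.card_eq_multiplicity]
    exact (Nat.card_congr (Subgroup.equivMapOfInjective _ _
      (Subgroup.subtype_injective _)).toEquiv).symm
  refine ⟨⟨Sylow.ofCard _ hScard, Sylow.coe_ofCard _ hScard⟩, ?_⟩
  -- normalizer part
  intro g hg
  rw [MulAction.mem_stabilizer_iff]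
  by_contra hgα
  have hαfix : ∀ x ∈ (T : Subgroup ↥(MulAction.stabilizer G α)).map
      (MulAction.stabilizer G α).subtype, x • α = α := by
    intro x hx
    obtain ⟨z, hz, rfl⟩ := Subgroup.mem_map.mp hx
    exact z.2
  have hβfix : ∀ x ∈ (T : Subgroup ↥(MulAction.stabilizer G α)).map
      (MulAction.stabilizer G α).subtype, x • (g • α) = g • α := by
    intro x hx
    have hgx : g⁻¹ * x * g ∈ (T : Subgroup ↥(MulAction.stabilizer G α)).map
        (MulAction.stabilizer G α).subtype := by
      apply (Subgroup.mem_normalizer_iff.mp hg (g⁻¹ * x * g)).mpr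
      have hxx : g * (g⁻¹ * x * g) * g⁻¹ = x := by group
      rw [hxx]; exact hx
    have h1 : (g⁻¹ * x * g) • α = α := hαfix _ hgx
    calc x • (g • α) = (x * g) • α := by rw [mul_smul]
      _ = (g * (g⁻¹ * x * g)) • α := by congr 1; group
      _ = g • ((g⁻¹ * x * g) • α) := by rw [mul_smul]
      _ = g • α := by rw [h1]
  obtain ⟨L, ⟨hLmem, hαL, hβL⟩, hLuniq⟩ :=
    S.exists_unique_line α (g • α) (fun h => hgα h.symm)
  have hfixL : ∀ x ∈ (T : Subgroup ↥(MulAction.stabilizer G α)).map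
      (MulAction.stabilizer G α).subtype, x • L = L := by
    intro x hx
    refine hLuniq (x • L) ⟨hstab x L hLmem, ?_, ?_⟩
    · have := Finset.smul_mem_smul_finset (a := x) hαL
      rwa [hαfix x hx] at this
    · have := Finset.smul_mem_smul_finset (a := x) hβL
      rwa [hβfix x hx] at this
  have hle : (T : Subgroup ↥(MulAction.stabilizer G α)).map
      (MulAction.stabilizer G α).subtype ≤ MulAction.stabilizer G L := by
    intro x hx
    rw [MulAction.mem_stabilizer_iff]
    exact hfixL x hx
  have horbL : MulAction.orbit G L = (↑S.lines : Set (Finset P)) := by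
    ext M
    constructor
    · intro hM
      obtain ⟨g', hg'⟩ := MulAction.mem_orbit_iff.mp hM
      rw [← hg']
      exact hstab g' L hLmem
    · intro hM
      obtain ⟨g', hg'⟩ := htrans L hLmem M hM
      exact MulAction.mem_orbit_iff.mpr ⟨g', hg'⟩
  have hindexL : (MulAction.stabilizer G L).index = b := by
    rw [MulAction.index_stabilizer, horbL, Set.ncard_coe_finset, hb]
  have hcardL : Nat.card (MulAction.stabilizer G L) * b = Nat.card G := by
    rw [← hindexL]; exact Subgroup.card_mul_index _
  have hdvd1 : t ^ (Nat.card G).factorization t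
      ∣ Nat.card (MulAction.stabilizer G L) := by
    rw [← hScard]; exact Subgroup.card_dvd_of_le hle
  have hdvd2 : t ^ ((Nat.card G).factorization t + 1) ∣ Nat.card G := by
    have h := mul_dvd_mul hdvd1 htb
    rw [hcardL] at h
    rwa [pow_succ]
  have hcontra := (Nat.Prime.pow_dvd_iff_le_factorization ht hGne).mp hdvd2
  omega
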